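/- Let X₁,…,X_k be i.i.d. square-integrable real random variables, conditionally i.i.d. given a σ-algebra G with common conditional distribution equal to that of X given G. Then the Monte-Carlo estimator X̄ = (1/k)∑ᵢ Xᵢ satisfies Var(X̄) = (1/k)·Var(X) + ((k−1)/k)·Var(E[X|G]). -/

import Mathlib

open MeasureTheory ProbabilityTheory
open scoped BigOperators

private lemma integrable_mul_of_memL2 {Ω : Type*} {F : MeasurableSpace Ω}
    {μ : Measure Ω} {f g : Ω → ℝ} (hf : MemLp f 2 μ) (hg : MemLp g 2 μ) :
    Integrable (fun ω => f ω * g ω) μ := by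
  refine (hf.integrable_sq.add hg.integrable_sq).mono'
    (hf.aestronglyMeasurable.mul hg.aestronglyMeasurable) ?_
  filter_upwards with ω
  simp only [Pi.add_apply]
  have h2 : ‖f ω * g ω‖ = |f ω| * |g ω| := by
    rw [Real.norm_eq_abs, abs_mul]
  nlinarith [sq_nonneg (|f ω| - |g ω|), sq_abs (f ω), sq_abs (g ω),
    abs_nonneg (f ω), abs_nonneg (g ω)]

private lemma memL2_condexp {Ω : Type*} {F : MeasurableSpace Ω}
    (μ : Measure Ω) [IsProbabilityMeasure μ]
    (m : MeasurableSpace Ω) (hm : m ≤ F)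
    {X : Ω → ℝ} (hX : MemLp X 2 μ) : MemLp (μ[X | m]) 2 μ := by
  have hg : MemLp (↑(condExpL2 ℝ ℝ hm (hX.toLp X)) : Ω → ℝ) 2 μ :=
    Lp.memLp _
  refine hg.ae_eq ?_
  refine ae_eq_condExp_of_forall_setIntegral_eq hm (hX.integrable one_le_two)
    (fun s hs hμs => integrableOn_condExpL2_of_measure_ne_top hm hμs.ne _)
    (fun s hs hμs => ?_) (aestronglyMeasurable_condExpL2 hm _)
  have h2 := integral_condExpL2_eq (𝕜 := ℝ) hm (hX.toLp X) hs hμs.ne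
  rw [h2]
  exact integral_congr_ae (ae_restrict_of_ae hX.coeFn_toLp)

/-- Variance of the `k`-sample Monte-Carlo estimator of a conditional expectation:
for `X₁,…,X_k` conditionally i.i.d. given `m` with common conditional law equal
to that of `X` given `m` (expressed through equality of conditional first and
second moments and conditional pairwise independence of products),
`Var((1/k)∑ᵢ Xᵢ) = (1/k)·Var(X) + ((k−1)/k)·Var(E[X|m])`. -/
theorem variance_monteCarlo_condExp {Ω : Type*} {F : MeasurableSpace Ω}
    (μ : Measure Ω) [IsProbabilityMeasure μ]
    (m : MeasurableSpace Ω) (hm : m ≤ F)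
    (X : Ω → ℝ) (hX : MemLp X 2 μ)
    (k : ℕ) (hk : 0 < k)
    (Xs : Fin k → Ω → ℝ) (hXs : ∀ i, MemLp (Xs i) 2 μ)
    -- common conditional law given `m` : equal conditional first moments,
    (hmean : ∀ i, μ[Xs i | m] =ᵐ[μ] μ[X | m])
    -- equal conditional second moments,
    (hsecond : ∀ i, μ[fun ω => (Xs i ω) ^ 2 | m] =ᵐ[μ] μ[fun ω => (X ω) ^ 2 | m])
    -- and conditional (pairwise) independence given `m`.
    (hindep : ∀ i j, i ≠ j →
      μ[fun ω => Xs i ω * Xs j ω | m] =ᵐ[μ] fun ω => (μ[X | m]) ω * (μ[X | m]) ω) :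
    variance (fun ω => (1 / (k : ℝ)) * ∑ i, Xs i ω) μ =
      (1 / (k : ℝ)) * variance X μ
        + (((k : ℝ) - 1) / (k : ℝ)) * variance (μ[X | m]) μ := by
  have hk' : (k : ℝ) ≠ 0 := Nat.cast_ne_zero.mpr hk.ne'
  set Y : Ω → ℝ := μ[X | m] with hYdef
  have hY2 : MemLp Y 2 μ := memL2_condexp μ m hm hX
  set e : ℝ := ∫ ω, X ω ∂μ with he
  set c : ℝ := ∫ ω, (X ω) ^ 2 ∂μ with hc
  set d : ℝ := ∫ ω, (Y ω) ^ 2 ∂μ with hd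
  -- first moments
  have hEXi : ∀ i, ∫ ω, Xs i ω ∂μ = e := by
    intro i
    rw [← integral_condExp hm,
      integral_congr_ae (hmean i), integral_condExp hm]
  have hEY : ∫ ω, Y ω ∂μ = e :=
    integral_condExp hm
  -- second moments
  have hEXi2 : ∀ i, ∫ ω, (Xs i ω) ^ 2 ∂μ = c := by
    intro i
    rw [← integral_condExp hm, integral_congr_ae (hsecond i),
      integral_condExp hm]
  -- cross moments
  have hcross : ∀ i j, i ≠ j → ∫ ω, Xs i ω * Xs j ω ∂μ = d := by
    intro i j hij
    rw [← integral_condExp hm,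
      integral_congr_ae (hindep i j hij)]
    simp_rw [hd, sq]
  have hprodint : ∀ i j : Fin k, Integrable (fun ω => Xs i ω * Xs j ω) μ :=
    fun i j => integrable_mul_of_memL2 (hXs i) (hXs j)
  -- the estimator is in L²
  have hSum : MemLp (fun ω => ∑ i, Xs i ω) 2 μ := by
    have h := memLp_finsetSum' (μ := μ) (p := (2 : ENNReal)) Finset.univ
      (fun i (_ : i ∈ Finset.univ) => hXs i)
    convert h using 1
    ext ω
    simp
  have hbar : MemLp (fun ω => (1 / (k : ℝ)) * ∑ i, Xs i ω) 2 μ :=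
    hSum.const_mul _
  -- mean of the estimator
  have hmean_bar : ∫ ω, (1 / (k : ℝ)) * ∑ i, Xs i ω ∂μ = e := by
    rw [integral_const_mul, integral_finset_sum _
      (fun i _ => (hXs i).integrable one_le_two)]
    simp only [hEXi, Finset.sum_const, Finset.card_univ, Fintype.card_fin,
      nsmul_eq_mul]
    field_simp
  -- second moment of the sum
  have hsum_sq : ∫ ω, (∑ i, Xs i ω) ^ 2 ∂μ = (k : ℝ) * c + ((k : ℝ) ^ 2 - k) * d := by
    have hpt : ∀ ω, (∑ i, Xs i ω) ^ 2 = ∑ i, ∑ j, Xs i ω * Xs j ω := by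
      intro ω; rw [sq, Finset.sum_mul_sum]
    simp_rw [hpt]
    rw [integral_finset_sum _ (fun i _ =>
      integrable_finset_sum _ (fun j _ => hprodint i j))]
    have hrow : ∀ i : Fin k, ∫ ω, ∑ j, Xs i ω * Xs j ω ∂μ = c + ((k : ℝ) - 1) * d := by
      intro i
      rw [integral_finset_sum _ (fun j _ => hprodint i j)]
      have : ∀ j : Fin k, ∫ ω, Xs i ω * Xs j ω ∂μ = if i = j then c else d := by
        intro j
        by_cases h : i = j
        · subst h; simp only [if_true]
          rw [← hEXi2 i]; congr 1; ext ω; ring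
        · simp only [h, if_false]; exact hcross i j h
      simp_rw [this]
      have : (∑ j : Fin k, if i = j then c else d)
          = ∑ j : Fin k, ((if i = j then c - d else 0) + d) := by
        apply Finset.sum_congr rfl; intro j _
        by_cases h : i = j <;> simp [h]
      rw [this, Finset.sum_add_distrib, Finset.sum_ite_eq]
      simp [Finset.card_univ]
      ring
    simp_rw [hrow]
    simp [Finset.sum_const, Finset.card_univ]
    ring
  -- second moment of the estimator
  have hsec_bar : ∫ ω, ((1 / (k : ℝ)) * ∑ i, Xs i ω) ^ 2 ∂μ
      = (1 / (k : ℝ)) ^ 2 * ((k : ℝ) * c + ((k : ℝ) ^ 2 - k) * d) := by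
    simp_rw [mul_pow]
    rw [integral_const_mul, hsum_sq]
  -- put everything together
  rw [variance_eq_sub hbar, variance_eq_sub hX, variance_eq_sub hY2]
  have h1 : (μ[(fun ω => (1 / (k : ℝ)) * ∑ i, Xs i ω) ^ 2] : ℝ)
      = (1 / (k : ℝ)) ^ 2 * ((k : ℝ) * c + ((k : ℝ) ^ 2 - k) * d) := by
    simpa [Pi.pow_apply] using hsec_bar
  have h2 : (μ[fun ω => (1 / (k : ℝ)) * ∑ i, Xs i ω] : ℝ) = e := hmean_bar
  have h3 : (μ[X ^ 2] : ℝ) = c := by simp [hc, Pi.pow_apply]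
  have h4 : (μ[X] : ℝ) = e := he.symm
  have h5 : (μ[Y ^ 2] : ℝ) = d := by simp [hd, Pi.pow_apply]
  have h6 : (μ[Y] : ℝ) = e := hEY
  rw [h1, h2, h3, h4, h5, h6]
  field_simp
  ring
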